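/- Let t₁,…,tₙ be elements of the free group F(k). The inequality e ≤ t₁ ∨ … ∨ tₙ holds in all ℓ-groups if and only if {t₁,…,tₙ} does not extend to a right order of F(k). -/

import Mathlib

lemma perm_inv_apply_self {α : Type*} (e : Equiv.Perm α) (x : α) : e⁻¹ (e x) = x :=
  Equiv.symm_apply_apply e x

lemma perm_apply_inv_self {α : Type*} (e : Equiv.Perm α) (x : α) : e (e⁻¹ x) = x :=
  Equiv.apply_symm_apply e x

section AutChain
variable {Ω : Type*} [LinearOrder Ω]

/-- The subgroup of strictly monotone permutations of a linear order. -/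
def monoPerms (Ω : Type*) [LinearOrder Ω] : Subgroup (Equiv.Perm Ω) where
  carrier := {σ | StrictMono ⇑σ}
  one_mem' := strictMono_id
  mul_mem' := fun ha hb => ha.comp hb
  inv_mem' := by
    intro σ h a b hab
    have : σ (σ⁻¹ a) < σ (σ⁻¹ b) := by simpa using hab
    exact h.lt_iff_lt.mp this

lemma monoPerms_strictMono (σ : monoPerms Ω) : StrictMono ⇑(σ : Equiv.Perm Ω) := σ.2

lemma monoPerms_mono (σ : monoPerms Ω) : Monotone ⇑(σ : Equiv.Perm Ω) := σ.2.monotone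

lemma monoPerms_inv_le {σ : monoPerms Ω} {a b : Ω} (h : (σ : Equiv.Perm Ω) a ≤ b) :
    a ≤ ((σ : Equiv.Perm Ω))⁻¹ b := by
  have := monoPerms_mono σ⁻¹ h
  simpa using this

lemma monoPerms_le_inv {σ : monoPerms Ω} {a b : Ω} (h : a ≤ (σ : Equiv.Perm Ω) b) :
    ((σ : Equiv.Perm Ω))⁻¹ a ≤ b := by
  have := monoPerms_mono σ⁻¹ h
  simpa using this

instance : PartialOrder (monoPerms Ω) where
  le σ τ := ∀ x, (σ : Equiv.Perm Ω) x ≤ (τ : Equiv.Perm Ω) x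
  le_refl σ x := le_rfl
  le_trans σ τ ρ h1 h2 x := (h1 x).trans (h2 x)
  le_antisymm σ τ h1 h2 := Subtype.ext (Equiv.ext fun x => le_antisymm (h1 x) (h2 x))

/-- pointwise max of strictly monotone permutations -/
def supPerm (σ τ : monoPerms Ω) : monoPerms Ω := by
  refine ⟨{ toFun := fun x => max ((σ : Equiv.Perm Ω) x) ((τ : Equiv.Perm Ω) x)
            invFun := fun y => min (((σ : Equiv.Perm Ω))⁻¹ y) (((τ : Equiv.Perm Ω))⁻¹ y)
            left_inv := ?_, right_inv := ?_ }, ?_⟩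
  · intro x
    dsimp only
    rcases le_total ((σ : Equiv.Perm Ω) x) ((τ : Equiv.Perm Ω) x) with h | h
    · rw [max_eq_right h, perm_inv_apply_self, min_eq_right (monoPerms_inv_le h)]
    · rw [max_eq_left h, perm_inv_apply_self, min_eq_left (monoPerms_inv_le h)]
  · intro y
    dsimp only
    rcases le_total (((σ : Equiv.Perm Ω))⁻¹ y) (((τ : Equiv.Perm Ω))⁻¹ y) with h | h
    · rw [min_eq_left h, perm_apply_inv_self,
        max_eq_left (by simpa using monoPerms_mono τ h)]
    · rw [min_eq_right h, perm_apply_inv_self,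
        max_eq_right (by simpa using monoPerms_mono σ h)]
  · intro a b hab
    exact max_lt_max (monoPerms_strictMono σ hab) (monoPerms_strictMono τ hab)

/-- pointwise min of strictly monotone permutations -/
def infPerm (σ τ : monoPerms Ω) : monoPerms Ω := by
  refine ⟨{ toFun := fun x => min ((σ : Equiv.Perm Ω) x) ((τ : Equiv.Perm Ω) x)
            invFun := fun y => max (((σ : Equiv.Perm Ω))⁻¹ y) (((τ : Equiv.Perm Ω))⁻¹ y)
            left_inv := ?_, right_inv := ?_ }, ?_⟩
  · intro x
    dsimp only
    rcases le_total ((σ : Equiv.Perm Ω) x) ((τ : Equiv.Perm Ω) x) with h | h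
    · rw [min_eq_left h, perm_inv_apply_self, max_eq_left (monoPerms_le_inv h)]
    · rw [min_eq_right h, perm_inv_apply_self, max_eq_right (monoPerms_le_inv h)]
  · intro y
    dsimp only
    rcases le_total (((σ : Equiv.Perm Ω))⁻¹ y) (((τ : Equiv.Perm Ω))⁻¹ y) with h | h
    · rw [max_eq_right h, perm_apply_inv_self,
        min_eq_right (by simpa using monoPerms_mono σ h)]
    · rw [max_eq_left h, perm_apply_inv_self,
        min_eq_left (by simpa using monoPerms_mono τ h)]
  · intro a b hab
    exact min_lt_min (monoPerms_strictMono σ hab) (monoPerms_strictMono τ hab)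

instance : Lattice (monoPerms Ω) where
  sup := supPerm
  le_sup_left _ _ _ := le_max_left _ _
  le_sup_right _ _ _ := le_max_right _ _
  sup_le _ _ _ h1 h2 x := max_le (h1 x) (h2 x)
  inf := infPerm
  inf_le_left _ _ _ := min_le_left _ _
  inf_le_right _ _ _ := min_le_right _ _
  le_inf _ _ _ h1 h2 x := le_min (h1 x) (h2 x)

instance : CovariantClass (monoPerms Ω) (monoPerms Ω) (· * ·) (· ≤ ·) := by
  constructor
  intro σ τ ρ h x
  exact monoPerms_mono σ (h x)

instance : CovariantClass (monoPerms Ω) (monoPerms Ω) (Function.swap (· * ·)) (· ≤ ·) := by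
  constructor
  intro σ τ ρ h x
  exact h ((σ : Equiv.Perm Ω) x)

lemma monoPerms_sup_apply (σ τ : monoPerms Ω) (x : Ω) :
    ((σ ⊔ τ : monoPerms Ω) : Equiv.Perm Ω) x
      = max ((σ : Equiv.Perm Ω) x) ((τ : Equiv.Perm Ω) x) := rfl

lemma monoPerms_sup'_apply {ι : Type*} (s : Finset ι) (hs : s.Nonempty)
    (f : ι → monoPerms Ω) (x : Ω) :
    ((s.sup' hs f : monoPerms Ω) : Equiv.Perm Ω) x = s.sup' hs fun i => (f i : Equiv.Perm Ω) x := by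
  induction s using Finset.cons_induction with
  | empty => exact absurd hs (by simp)
  | cons a s ha ih =>
    rcases s.eq_empty_or_nonempty with rfl | hs'
    · simp
    · rw [Finset.sup'_cons hs', Finset.sup'_cons hs', monoPerms_sup_apply, ih hs']

end AutChain

namespace PLmap

variable (n : ℤ)

/-- period index -/
noncomputable def pp (x : ℚ) : ℤ := ⌊x / (n : ℚ)⌋

/-- position within period, in `[0, n)` -/
noncomputable def tt (x : ℚ) : ℚ := x - (n : ℚ) * pp n x

/-- within-period map -/
noncomputable def phi (t : ℚ) : ℚ :=
  if t < (n : ℚ) - 1 then t / ((n : ℚ) - 1) else 1 + (t - ((n : ℚ) - 1)) * ((n : ℚ) - 1)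

/-- inverse within-period map -/
noncomputable def psi (s : ℚ) : ℚ :=
  if s < 1 then s * ((n : ℚ) - 1) else ((n : ℚ) - 1) + (s - 1) / ((n : ℚ) - 1)

/-- the global piecewise linear map -/
noncomputable def Fm (x : ℚ) : ℚ := (n : ℚ) * pp n x + phi n (tt n x)

/-- the global inverse map -/
noncomputable def Gm (z : ℚ) : ℚ := (n : ℚ) * pp n z + psi n (tt n z)

variable {n}
variable (hn : 2 ≤ n)

section basic
include hn

lemma nq_pos : (0 : ℚ) < (n : ℚ) := by
  have : (2 : ℚ) ≤ (n : ℚ) := by exact_mod_cast hn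
  linarith

lemma nq1_pos : (0 : ℚ) < (n : ℚ) - 1 := by
  have : (2 : ℚ) ≤ (n : ℚ) := by exact_mod_cast hn
  linarith

lemma decomp' (x : ℚ) : x = (n : ℚ) * pp n x + tt n x := by unfold tt; ring

lemma tt_nonneg (x : ℚ) : 0 ≤ tt n x := by
  have h := Int.floor_le (x / (n : ℚ))
  have hn' := nq_pos hn
  have := (le_div_iff₀ hn').mp h
  unfold tt pp
  nlinarith [this]

lemma tt_lt (x : ℚ) : tt n x < (n : ℚ) := by
  have h := Int.lt_floor_add_one (x / (n : ℚ))
  have hn' := nq_pos hn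
  have := (div_lt_iff₀ hn').mp h
  unfold tt pp
  nlinarith [this]

lemma pp_eval (p : ℤ) (t : ℚ) (h0 : 0 ≤ t) (h1 : t < (n : ℚ)) :
    pp n ((n : ℚ) * p + t) = p := by
  have hn' := nq_pos hn
  unfold pp
  have h2 : ((n : ℚ) * p + t) / (n : ℚ) = (p : ℚ) + t / (n : ℚ) := by
    field_simp
  rw [h2, Int.floor_intCast_add]
  have h3 : ⌊t / (n : ℚ)⌋ = 0 := by
    rw [Int.floor_eq_zero_iff]
    constructor
    · positivity
    · rw [div_lt_one hn']; exact h1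
  rw [h3, add_zero]

lemma tt_eval (p : ℤ) (t : ℚ) (h0 : 0 ≤ t) (h1 : t < (n : ℚ)) :
    tt n ((n : ℚ) * p + t) = t := by
  unfold tt
  rw [pp_eval hn p t h0 h1]
  ring

lemma phi_nonneg {t : ℚ} (h0 : 0 ≤ t) : 0 ≤ phi n t := by
  unfold phi
  have h2 := nq1_pos hn
  split_ifs with h
  · exact div_nonneg h0 (le_of_lt h2)
  · push_neg at h
    nlinarith

lemma phi_lt {t : ℚ} (h1 : t < (n : ℚ)) : phi n t < (n : ℚ) := by
  unfold phi
  have h2 := nq1_pos hn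
  split_ifs with h
  · calc t / ((n:ℚ) - 1) < ((n:ℚ)-1)/((n:ℚ)-1) := by
          apply div_lt_div_of_pos_right h h2
        _ = 1 := div_self (ne_of_gt h2)
        _ < (n : ℚ) := by linarith
  · nlinarith

lemma psi_nonneg {s : ℚ} (h0 : 0 ≤ s) : 0 ≤ psi n s := by
  unfold psi
  split_ifs with h
  · have := nq1_pos hn
    positivity
  · push_neg at h
    have h2 := nq1_pos hn
    have : 0 ≤ (s - 1) / ((n:ℚ) - 1) := by
      apply div_nonneg (by linarith) (le_of_lt h2)
    linarith

lemma psi_lt {s : ℚ} (h0 : 0 ≤ s) (h1 : s < (n : ℚ)) : psi n s < (n : ℚ) := by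
  unfold psi
  have h2 := nq1_pos hn
  split_ifs with h
  · nlinarith
  · push_neg at h
    have : (s - 1) / ((n:ℚ) - 1) < 1 := by
      rw [div_lt_one h2]; linarith
    linarith

lemma psi_phi {t : ℚ} (h0 : 0 ≤ t) (h1 : t < (n : ℚ)) : psi n (phi n t) = t := by
  have h2 := nq1_pos hn
  by_cases h : t < (n : ℚ) - 1
  · rw [phi, if_pos h, psi, if_pos ((div_lt_one h2).mpr h)]
    field_simp
  · push_neg at h
    rw [phi, if_neg (not_lt.mpr h), psi, if_neg (by push_neg; nlinarith)]
    field_simp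
    ring

lemma phi_psi {s : ℚ} (h0 : 0 ≤ s) (h1 : s < (n : ℚ)) : phi n (psi n s) = s := by
  have h2 := nq1_pos hn
  by_cases h : s < 1
  · rw [psi, if_pos h, phi, if_pos (by nlinarith)]
    field_simp
  · push_neg at h
    have hs1 : (s - 1) / ((n:ℚ) - 1) < 1 := by rw [div_lt_one h2]; linarith
    rw [psi, if_neg (not_lt.mpr h), phi, if_neg (by
      push_neg
      have h3 : 0 ≤ (s-1)/((n:ℚ)-1) := div_nonneg (by linarith) (le_of_lt h2)
      linarith)]
    field_simp
    ring

lemma phi_strictMonoOn {t₁ t₂ : ℚ} (h0 : 0 ≤ t₁) (hlt : t₁ < t₂) (h1 : t₂ < (n : ℚ)) :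
    phi n t₁ < phi n t₂ := by
  have h2 := nq1_pos hn
  unfold phi
  split_ifs with ha hb hb
  · exact div_lt_div_of_pos_right hlt h2
  · push_neg at hb
    have : t₁ / ((n:ℚ)-1) < 1 := (div_lt_one h2).mpr ha
    nlinarith
  · push_neg at ha
    linarith
  · push_neg at ha hb
    nlinarith

lemma Fm_eval (p : ℤ) (t : ℚ) (h0 : 0 ≤ t) (h1 : t < (n : ℚ)) :
    Fm n ((n : ℚ) * p + t) = (n : ℚ) * p + phi n t := by
  unfold Fm
  rw [pp_eval hn p t h0 h1, tt_eval hn p t h0 h1]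

lemma Gm_eval (p : ℤ) (t : ℚ) (h0 : 0 ≤ t) (h1 : t < (n : ℚ)) :
    Gm n ((n : ℚ) * p + t) = (n : ℚ) * p + psi n t := by
  unfold Gm
  rw [pp_eval hn p t h0 h1, tt_eval hn p t h0 h1]

lemma Gm_Fm (x : ℚ) : Gm n (Fm n x) = x := by
  have h0 := tt_nonneg hn x
  have h1 := tt_lt hn x
  have hd := decomp' (n := n) (hn := hn) x
  calc Gm n (Fm n x) = Gm n (Fm n ((n:ℚ) * pp n x + tt n x)) := by rw [← hd]
    _ = Gm n ((n:ℚ) * pp n x + phi n (tt n x)) := by rw [Fm_eval hn _ _ h0 h1]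
    _ = (n:ℚ) * pp n x + psi n (phi n (tt n x)) := by
        rw [Gm_eval hn _ _ (phi_nonneg hn h0) (phi_lt hn h1)]
    _ = (n:ℚ) * pp n x + tt n x := by rw [psi_phi hn h0 h1]
    _ = x := hd.symm

lemma Fm_Gm (z : ℚ) : Fm n (Gm n z) = z := by
  have h0 := tt_nonneg hn z
  have h1 := tt_lt hn z
  have hd := decomp' (n := n) (hn := hn) z
  calc Fm n (Gm n z) = Fm n (Gm n ((n:ℚ) * pp n z + tt n z)) := by rw [← hd]
    _ = Fm n ((n:ℚ) * pp n z + psi n (tt n z)) := by rw [Gm_eval hn _ _ h0 h1]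
    _ = (n:ℚ) * pp n z + phi n (psi n (tt n z)) := by
        rw [Fm_eval hn _ _ (psi_nonneg hn h0) (psi_lt hn h0 h1)]
    _ = (n:ℚ) * pp n z + tt n z := by rw [phi_psi hn h0 h1]
    _ = z := hd.symm

lemma pp_mono {x y : ℚ} (h : x ≤ y) : pp n x ≤ pp n y := by
  unfold pp
  apply Int.floor_le_floor
  rw [div_eq_mul_inv, div_eq_mul_inv]
  exact mul_le_mul_of_nonneg_right h (inv_nonneg.mpr (le_of_lt (nq_pos hn)))

lemma Fm_strictMono : StrictMono (Fm n) := by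
  intro x y hxy
  have hpp := pp_mono hn (le_of_lt hxy)
  rcases lt_or_eq_of_le hpp with hp | hp
  · unfold Fm
    have h1 : phi n (tt n x) < (n : ℚ) := phi_lt hn (tt_lt hn x)
    have h2 : (0:ℚ) ≤ phi n (tt n y) := phi_nonneg hn (tt_nonneg hn y)
    have h3 : ((pp n x : ℚ)) + 1 ≤ ((pp n y : ℚ)) := by exact_mod_cast hp
    have hn' := nq_pos hn
    nlinarith
  · unfold Fm
    rw [← hp]
    have htt : tt n x < tt n y := by
      unfold tt
      rw [← hp]
      linarith
    have := phi_strictMonoOn hn (tt_nonneg hn x) htt (tt_lt hn y)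
    linarith

/-- floor of x in terms of period data -/
lemma floor_eq (x : ℚ) : ⌊x⌋ = n * pp n x + ⌊tt n x⌋ := by
  conv_lhs => rw [decomp' (n := n) (hn := hn) x]
  rw [show ((n:ℚ) * pp n x) = ((n * pp n x : ℤ) : ℚ) by push_cast; ring]
  rw [Int.floor_intCast_add]

/-- class of x -/
lemma emod_floor (x : ℚ) : ⌊x⌋ % n = ⌊tt n x⌋ := by
  rw [floor_eq hn x]
  have h0 : (0:ℤ) ≤ ⌊tt n x⌋ := Int.floor_nonneg.mpr (tt_nonneg hn x)
  have h1 : ⌊tt n x⌋ < n := Int.floor_lt.mpr (by exact_mod_cast tt_lt hn x)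
  rw [add_comm, Int.add_mul_emod_self_left, Int.emod_eq_of_lt h0 h1]

end basic

section perm
include hn

lemma floor_tt_nonneg (x : ℚ) : 0 ≤ ⌊tt n x⌋ := Int.floor_nonneg.mpr (tt_nonneg hn x)

lemma floor_tt_lt (x : ℚ) : ⌊tt n x⌋ < n := Int.floor_lt.mpr (by exact_mod_cast tt_lt hn x)

/-- the conjugated piecewise linear permutation -/
noncomputable def permF (c : ℤ) : Equiv.Perm ℚ where
  toFun x := Fm n (x - c) + c
  invFun z := Gm n (z - c) + c
  left_inv x := by simp [Gm_Fm hn]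
  right_inv z := by simp [Fm_Gm hn]

lemma permF_strictMono (c : ℤ) : StrictMono ⇑(permF hn c) := by
  intro x y hxy
  have := Fm_strictMono hn (show x - (c:ℚ) < y - c by linarith)
  show Fm n (x - c) + c < Fm n (y - c) + c
  linarith

lemma permF_sub (c : ℤ) (x : ℚ) : permF hn c x - c = Fm n (x - c) := by
  show Fm n (x - c) + c - c = Fm n (x - c); ring

lemma permF_symm_sub (c : ℤ) (x : ℚ) : (permF hn c)⁻¹ x - c = Gm n (x - c) := by
  show Gm n (x - c) + c - c = Gm n (x - c); ring

lemma permF_mapsto (c : ℤ) (x : ℚ) (hx : ⌊x - (c:ℚ)⌋ % n ≠ n - 1) :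
    ⌊permF hn c x - (c:ℚ)⌋ % n = 0 := by
  set u := x - (c:ℚ) with hu
  have hm := emod_floor hn u
  have h0 := floor_tt_nonneg hn u
  have h1 := floor_tt_lt hn u
  have hne : ⌊tt n u⌋ ≠ n - 1 := by rw [← hm]; exact hx
  have h2 : ⌊tt n u⌋ + 1 ≤ n - 1 := by omega
  have htt : tt n u < (n : ℚ) - 1 := by
    have := Int.lt_floor_add_one (tt n u)
    have h3 : ((⌊tt n u⌋ : ℚ) + 1) ≤ (n : ℚ) - 1 := by exact_mod_cast h2
    linarith
  have hphi : phi n (tt n u) = tt n u / ((n:ℚ) - 1) := by rw [phi, if_pos htt]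
  have hFm : Fm n u = ((n * pp n u : ℤ) : ℚ) + tt n u / ((n:ℚ) - 1) := by
    rw [Fm, hphi]; push_cast; ring
  rw [permF_sub hn c x, ← hu, hFm, Int.floor_intCast_add]
  have hz : ⌊tt n u / ((n:ℚ) - 1)⌋ = 0 := by
    rw [Int.floor_eq_zero_iff]
    constructor
    · exact div_nonneg (tt_nonneg hn u) (le_of_lt (nq1_pos hn))
    · exact (div_lt_one (nq1_pos hn)).mpr htt
  rw [hz, add_zero, Int.mul_emod_right]

lemma permF_symm_mapsto (c : ℤ) (x : ℚ) (hx : ⌊x - (c:ℚ)⌋ % n ≠ 0) :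
    ⌊(permF hn c)⁻¹ x - (c:ℚ)⌋ % n = n - 1 := by
  set u := x - (c:ℚ) with hu
  have hm := emod_floor hn u
  have h0 := floor_tt_nonneg hn u
  have h1 := floor_tt_lt hn u
  have hne : ⌊tt n u⌋ ≠ 0 := by rw [← hm]; exact hx
  have h2 : 1 ≤ ⌊tt n u⌋ := by omega
  have htt : (1:ℚ) ≤ tt n u := by
    have := Int.floor_le (tt n u)
    have h3 : ((1:ℤ) : ℚ) ≤ ((⌊tt n u⌋ : ℚ)) := by exact_mod_cast h2
    push_cast at h3
    linarith
  have hpsi : psi n (tt n u) = ((n:ℚ) - 1) + (tt n u - 1) / ((n:ℚ) - 1) := by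
    rw [psi, if_neg (not_lt.mpr htt)]
  have hGm : Gm n u = ((n * pp n u + (n - 1) : ℤ) : ℚ) + (tt n u - 1) / ((n:ℚ) - 1) := by
    rw [Gm, hpsi]; push_cast; ring
  rw [permF_symm_sub hn c x, ← hu, hGm, Int.floor_intCast_add]
  have hz : ⌊(tt n u - 1) / ((n:ℚ) - 1)⌋ = 0 := by
    rw [Int.floor_eq_zero_iff]
    constructor
    · exact div_nonneg (by linarith) (le_of_lt (nq1_pos hn))
    · rw [div_lt_one (nq1_pos hn)]
      have := tt_lt hn u
      linarith
  rw [hz, add_zero]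
  have hlt : n - 1 < n := by omega
  have hge : (0:ℤ) ≤ n - 1 := by omega
  rw [add_comm (n * pp n u) (n - 1), Int.add_mul_emod_self_left]
  exact Int.emod_eq_of_lt hge hlt

end perm

section modhelp

lemma emod_shift {n a c e : ℤ} (he0 : 0 ≤ e) (he1 : e < n) :
    (a - c) % n = e ↔ a % n = (c + e) % n := by
  have hee : e % n = e := Int.emod_eq_of_lt he0 he1
  constructor
  · intro h
    rw [Int.emod_eq_emod_iff_emod_sub_eq_zero]
    have h4 : a - (c + e) = (a - c) - e := by ring
    rw [h4, Int.sub_emod, h, hee, sub_self, Int.zero_emod]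
  · intro h
    have h5 : (a - (c + e)) % n = 0 := Int.emod_eq_emod_iff_emod_sub_eq_zero.mp h
    have h4 : (a - c) - e = a - (c + e) := by ring
    have h6 : ((a - c) - e) % n = 0 := by rw [h4]; exact h5
    have := Int.emod_eq_emod_iff_emod_sub_eq_zero.mpr h6
    rw [this, hee]

end modhelp

end PLmap


section PingPong

open PLmap

variable {k : ℕ} (hk : 1 ≤ k)

/-- number of classes -/
def NN (k : ℕ) : ℤ := 2 * k + 1

include hk

lemma NN_ge : 2 ≤ NN k := by unfold NN; omega

/-- the class of a generator letter -/
def cOf (p : Fin k × Bool) : ℤ := 2 * (p.1 : ℤ) + (if p.2 then 2 else 1)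

lemma cOf_pos (p : Fin k × Bool) : 1 ≤ cOf p ∧ cOf p ≤ NN k - 1 := by
  obtain ⟨i, b⟩ := p
  have := i.isLt
  unfold cOf NN
  cases b <;> simp <;> omega

lemma cOf_inj {p q : Fin k × Bool} (h : cOf p = cOf q) : p = q := by
  obtain ⟨i, b⟩ := p
  obtain ⟨j, b'⟩ := q
  unfold cOf at h
  simp only at h
  have hij : (i : ℤ) = (j : ℤ) ∧ b = b' := by
    cases b <;> cases b' <;> simp at h ⊢ <;> omega
  obtain ⟨h1, h2⟩ := hij
  have : i = j := by
    apply Fin.ext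
    exact_mod_cast h1
  simp [this, h2]

/-- generators of the free group action -/
noncomputable def gens (i : Fin k) : Equiv.Perm ℚ := permF (NN_ge hk) (2 * (i : ℤ) + 2)

lemma gens_strictMono (i : Fin k) : StrictMono ⇑(gens hk i) := permF_strictMono _ _

/-- class of a rational point -/
def cls (k : ℕ) (x : ℚ) : ℤ := ⌊x⌋ % NN k

lemma gens_step_true (i : Fin k) (y : ℚ) (hy : cls k y ≠ cOf (i, false)) :
    cls k (gens hk i y) = cOf (i, true) := by
  have hn := NN_ge hk
  have hb := cOf_pos hk (i, true)
  have hb' := cOf_pos hk (i, false)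
  have hcOft : cOf (i, true) = 2 * (i : ℤ) + 2 := by simp [cOf]
  have hcOff : cOf (i, false) = 2 * (i : ℤ) + 1 := by simp [cOf]
  have h1 : ⌊y - ((2 * (i : ℤ) + 2 : ℤ) : ℚ)⌋ % NN k ≠ NN k - 1 := by
    intro h
    rw [Int.floor_sub_intCast] at h
    rw [emod_shift (by omega) (by omega)] at h
    apply hy
    have h2 : (2 * (i : ℤ) + 2 + (NN k - 1)) % NN k = cOf (i, false) := by
      have h3 : 2 * (i : ℤ) + 2 + (NN k - 1) = cOf (i, false) + NN k * 1 := by omega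
      rw [h3, Int.add_mul_emod_self_left]
      exact Int.emod_eq_of_lt (by omega) (by omega)
    unfold cls
    rw [h, h2]
  have h4 := permF_mapsto (NN_ge hk) (2 * (i : ℤ) + 2) y h1
  rw [Int.floor_sub_intCast, emod_shift (le_refl 0) (by omega)] at h4
  unfold cls gens
  rw [h4, add_zero, ← hcOft]
  exact Int.emod_eq_of_lt (by omega) (by omega)

lemma gens_step_false (i : Fin k) (y : ℚ) (hy : cls k y ≠ cOf (i, true)) :
    cls k ((gens hk i)⁻¹ y) = cOf (i, false) := by
  have hn := NN_ge hk
  have hb := cOf_pos hk (i, true)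
  have hb' := cOf_pos hk (i, false)
  have hcOft : cOf (i, true) = 2 * (i : ℤ) + 2 := by simp [cOf]
  have hcOff : cOf (i, false) = 2 * (i : ℤ) + 1 := by simp [cOf]
  have h1 : ⌊y - ((2 * (i : ℤ) + 2 : ℤ) : ℚ)⌋ % NN k ≠ 0 := by
    intro h
    rw [Int.floor_sub_intCast] at h
    rw [emod_shift (le_refl 0) (by omega)] at h
    apply hy
    rw [add_zero] at h
    have h2 : (2 * (i : ℤ) + 2) % NN k = cOf (i, true) := by
      rw [← hcOft]
      exact Int.emod_eq_of_lt (by omega) (by omega)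
    unfold cls
    rw [h, h2]
  have h4 := permF_symm_mapsto (NN_ge hk) (2 * (i : ℤ) + 2) y h1
  rw [Int.floor_sub_intCast, emod_shift (by omega) (by omega)] at h4
  unfold cls gens
  rw [h4]
  have h3 : (2 * (i : ℤ) + 2 + (NN k - 1)) % NN k = cOf (i, false) := by
    have h5 : 2 * (i : ℤ) + 2 + (NN k - 1) = cOf (i, false) + NN k * 1 := by omega
    rw [h5, Int.add_mul_emod_self_left]
    exact Int.emod_eq_of_lt (by omega) (by omega)
  exact h3

/-- letter action -/
noncomputable def chi (p : Fin k × Bool) : Equiv.Perm ℚ :=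
  cond p.2 (gens hk p.1) (gens hk p.1)⁻¹

lemma chi_step (p : Fin k × Bool) (y : ℚ) (hy : cls k y ≠ cOf (p.1, !p.2)) :
    cls k (chi hk p y) = cOf p := by
  obtain ⟨i, b⟩ := p
  cases b
  · exact gens_step_false hk i y (by simpa using hy)
  · exact gens_step_true hk i y (by simpa using hy)

lemma cls_zero : cls k 0 = 0 := by unfold cls; simp

/-- evaluation of a reduced word at the base point 0 -/
lemma prod_eval : ∀ (L' : List (Fin k × Bool)) (p : Fin k × Bool),
    List.Chain' (fun p q => ¬(p.1 = q.1 ∧ q.2 = !p.2)) (p :: L') →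
    cls k ((((p :: L').map (chi hk)).prod) 0) = cOf p := by
  intro L'
  induction L' with
  | nil =>
    intro p _
    rw [List.map_cons, List.map_nil, List.prod_cons, List.prod_nil, mul_one]
    apply chi_step
    rw [cls_zero hk]
    have := cOf_pos hk (p.1, !p.2)
    omega
  | cons q L'' ih =>
    intro p hch
    rw [List.map_cons, List.prod_cons, Equiv.Perm.mul_apply]
    apply chi_step
    rw [ih q (List.isChain_cons_cons.mp hch).2]
    intro hEq
    have hq : q = (p.1, !p.2) := cOf_inj hk hEq
    exact (List.isChain_cons_cons.mp hch).1 ⟨(congrArg Prod.fst hq).symm, congrArg Prod.snd hq⟩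

/-- no-cancellation property of reduced words -/
lemma chain'_of_reduced (L : List (Fin k × Bool))
    (hred : ∀ (L₂ L₃ : List (Fin k × Bool)) (x : Fin k) (b : Bool),
      L ≠ L₂ ++ (x, b) :: (x, !b) :: L₃) :
    List.Chain' (fun p q => ¬(p.1 = q.1 ∧ q.2 = !p.2)) L := by
  clear hk
  induction L with
  | nil => exact List.isChain_nil
  | cons a L ih =>
    cases L with
    | nil => exact List.isChain_singleton _
    | cons b L' =>
      unfold List.Chain'
      rw [List.isChain_cons_cons]
      constructor
      · rintro ⟨h1, h2⟩
        obtain ⟨a1, a2⟩ := a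
        obtain ⟨b1, b2⟩ := b
        simp only at h1 h2
        subst h1; subst h2
        exact hred [] L' a1 a2 rfl
      · apply ih
        intro L₂ L₃ x bb hEq
        exact hred (a :: L₂) L₃ x bb (by rw [hEq]; rfl)

/-- the free group action -/
noncomputable def rho : FreeGroup (Fin k) →* Equiv.Perm ℚ := FreeGroup.lift (gens hk)

lemma rho_injective : Function.Injective (rho hk) := by
  classical
  rw [injective_iff_map_eq_one]
  intro g hg
  by_contra hne
  have hW : g.toWord ≠ [] := fun h => hne (FreeGroup.toWord_eq_nil_iff.mp h)
  obtain ⟨p, L', hL⟩ := List.exists_cons_of_ne_nil hW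
  have hred : ∀ (L₂ L₃ : List (Fin k × Bool)) (x : Fin k) (b : Bool),
      g.toWord ≠ L₂ ++ (x, b) :: (x, !b) :: L₃ := by
    intro L₂ L₃ x b hEq
    have h1 : FreeGroup.reduce g.toWord = g.toWord := FreeGroup.reduce_toWord g
    rw [hEq] at h1
    exact FreeGroup.reduce.not h1
  have hch := chain'_of_reduced hk g.toWord hred
  have h2 : rho hk g = (g.toWord.map (chi hk)).prod := by
    conv_lhs => rw [← FreeGroup.mk_toWord (x := g)]
    rw [rho, FreeGroup.lift_mk]
    rfl
  rw [hL] at hch h2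
  have h3 := prod_eval hk L' p hch
  rw [← h2, hg] at h3
  simp only [Equiv.Perm.one_apply] at h3
  rw [cls_zero hk] at h3
  have := cOf_pos hk p
  omega

lemma rho_strictMono (g : FreeGroup (Fin k)) : StrictMono ⇑(rho hk g) := by
  have hrange : (rho hk).range ≤ monoPerms ℚ := by
    apply FreeGroup.range_lift_le
    rintro σ ⟨i, rfl⟩
    exact gens_strictMono hk i
  exact hrange ⟨g, rfl⟩

end PingPong


section RightOrder

/-- A right-invariant linear order on a group from a faithful action by strictly
monotone permutations. -/
lemma exists_rightOrder_of_action {G : Type*} [Group G] (ρ : G →* Equiv.Perm ℚ)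
    (hmono : ∀ g, StrictMono ⇑(ρ g)) (hinj : Function.Injective ρ) :
    ∃ r : G → G → Prop, IsLinearOrder G r ∧ (∀ a b c, r a b → r (a * c) (b * c)) := by
  classical
  have hwo : IsWellOrder ℚ WellOrderingRel := WellOrderingRel.isWellOrder
  have wf : WellFounded (WellOrderingRel : ℚ → ℚ → Prop) := hwo.toIsWellFounded.wf
  refine ⟨fun g h => g = h ∨
      ∃ x : ℚ, (∀ y, WellOrderingRel y x → ρ g⁻¹ y = ρ h⁻¹ y) ∧ ρ g⁻¹ x < ρ h⁻¹ x, ?_, ?_⟩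
  · have htotal : ∀ g h : G, g ≠ h →
        ((∃ x : ℚ, (∀ y, WellOrderingRel y x → ρ g⁻¹ y = ρ h⁻¹ y) ∧ ρ g⁻¹ x < ρ h⁻¹ x) ∨
         (∃ x : ℚ, (∀ y, WellOrderingRel y x → ρ h⁻¹ y = ρ g⁻¹ y) ∧ ρ h⁻¹ x < ρ g⁻¹ x)) := by
      intro g h hne
      have hSne : {x : ℚ | ρ g⁻¹ x ≠ ρ h⁻¹ x}.Nonempty := by
        by_contra hS
        push_neg at hS
        simp only [Set.not_nonempty_iff_eq_empty, Set.eq_empty_iff_forall_notMem,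
          Set.mem_setOf_eq, not_not] at hS
        have : ρ g⁻¹ = ρ h⁻¹ := Equiv.ext hS
        exact hne (inv_injective (hinj this))
      set m := wf.min _ hSne with hm
      have hmem : ρ g⁻¹ m ≠ ρ h⁻¹ m := wf.min_mem _ hSne
      have hpre : ∀ y, WellOrderingRel y m → ρ g⁻¹ y = ρ h⁻¹ y := by
        intro y hy
        by_contra hyS
        exact wf.not_lt_min _ hyS hy
      rcases lt_trichotomy (ρ g⁻¹ m) (ρ h⁻¹ m) with hlt | heq | hgt
      · exact Or.inl ⟨m, hpre, hlt⟩
      · exact absurd heq hmem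
      · exact Or.inr ⟨m, fun y hy => (hpre y hy).symm, hgt⟩
    refine { refl := fun a => Or.inl rfl, trans := ?_, antisymm := ?_, total := ?_ }
    · rintro a b c (rfl | ⟨x₁, hp₁, hx₁⟩) h2
      · exact h2
      rcases h2 with rfl | ⟨x₂, hp₂, hx₂⟩
      · exact Or.inr ⟨x₁, hp₁, hx₁⟩
      rcases trichotomous_of WellOrderingRel x₁ x₂ with hlt | rfl | hgt
      · refine Or.inr ⟨x₁, ?_, ?_⟩
        · intro y hy
          exact (hp₁ y hy).trans (hp₂ y (trans_of WellOrderingRel hy hlt))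
        · rw [← hp₂ x₁ hlt]; exact hx₁
      · refine Or.inr ⟨x₁, fun y hy => (hp₁ y hy).trans (hp₂ y hy), hx₁.trans hx₂⟩
      · refine Or.inr ⟨x₂, ?_, ?_⟩
        · intro y hy
          exact (hp₁ y (trans_of WellOrderingRel hy hgt)).trans (hp₂ y hy)
        · rw [hp₁ x₂ hgt]; exact hx₂
    · rintro a b (rfl | ⟨x₁, hp₁, hx₁⟩) h2
      · rfl
      rcases h2 with rfl | ⟨x₂, hp₂, hx₂⟩
      · rfl
      exfalso
      rcases trichotomous_of WellOrderingRel x₁ x₂ with hlt | rfl | hgt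
      · rw [hp₂ x₁ hlt] at hx₁; exact lt_irrefl _ hx₁
      · exact lt_irrefl _ (hx₁.trans hx₂)
      · rw [hp₁ x₂ hgt] at hx₂; exact lt_irrefl _ hx₂
    · intro a b
      by_cases hab : a = b
      · exact Or.inl (Or.inl hab)
      rcases htotal a b hab with h | h
      · exact Or.inl (Or.inr h)
      · exact Or.inr (Or.inr h)
  · rintro a b c (rfl | ⟨x, hp, hx⟩)
    · exact Or.inl rfl
    refine Or.inr ⟨x, ?_, ?_⟩
    · intro y hy
      have h1 : ∀ z : G, ρ (z * c)⁻¹ y = ρ c⁻¹ (ρ z⁻¹ y) := by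
        intro z
        rw [mul_inv_rev, map_mul, Equiv.Perm.mul_apply]
      rw [h1 a, h1 b, hp y hy]
    · have h1 : ∀ z : G, ρ (z * c)⁻¹ x = ρ c⁻¹ (ρ z⁻¹ x) := by
        intro z
        rw [mul_inv_rev, map_mul, Equiv.Perm.mul_apply]
      rw [h1 a, h1 b]
      exact hmono c⁻¹ hx

lemma freeGroup_subsingleton : Subsingleton (FreeGroup (Fin 0)) := by
  constructor
  have h1 : ∀ x : FreeGroup (Fin 0), x = 1 := by
    intro x
    cases h : x.toWord with
    | nil => exact FreeGroup.toWord_eq_nil_iff.mp h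
    | cons a L => exact a.1.elim0
  intro a b
  rw [h1 a, h1 b]

/-- every free group of finite rank carries a right-invariant linear order -/
lemma freeGroup_exists_rightOrder (k : ℕ) :
    ∃ r : FreeGroup (Fin k) → FreeGroup (Fin k) → Prop,
      IsLinearOrder (FreeGroup (Fin k)) r ∧ (∀ a b c, r a b → r (a * c) (b * c)) := by
  rcases Nat.eq_zero_or_pos k with rfl | hk
  · have hsub := freeGroup_subsingleton
    refine exists_rightOrder_of_action 1 ?_ ?_
    · intro g
      simp only [MonoidHom.one_apply]
      exact fun a b hab => hab
    · intro a b _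
      exact Subsingleton.elim a b
  · exact exists_rightOrder_of_action (rho hk) (rho_strictMono hk) (rho_injective hk)

end RightOrder


section LGroupCS
variable {L : Type*} [Group L] [Lattice L]
  [CovariantClass L L (· * ·) (· ≤ ·)]
  [CovariantClass L L (Function.swap (· * ·)) (· ≤ ·)]

/-- convex (p-convex) subgroup-like subsets of an ℓ-group -/
structure IsCS (S : Set L) : Prop where
  one_mem : (1 : L) ∈ S
  mul_mem : ∀ {a b : L}, a ∈ S → b ∈ S → a * b ∈ S
  inv_mem : ∀ {a : L}, a ∈ S → a⁻¹ ∈ S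
  conv : ∀ {a c : L}, c ∈ S → 1 ≤ a → a ≤ c → a ∈ S
  sup_one_mem : ∀ {a : L}, a ∈ S → a ⊔ 1 ∈ S

lemma IsCS.mabs_mem {S : Set L} (hS : IsCS S) {a : L} (ha : a ∈ S) : a ⊔ a⁻¹ ∈ S := by
  have h1 : a ⊔ a⁻¹ = (a * a ⊔ 1) * a⁻¹ := by
    rw [sup_mul, one_mul, mul_assoc, mul_inv_cancel, mul_one]
  rw [h1]
  exact hS.mul_mem (hS.sup_one_mem (hS.mul_mem ha ha)) (hS.inv_mem ha)

/-- key sub-multiplicativity of ⊓ for positive elements -/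
lemma inf_mul_le_of_one_le {a b c : L} (ha : 1 ≤ a) (hb : 1 ≤ b) (hc : 1 ≤ c) :
    a ⊓ (b * c) ≤ (a ⊓ b) * (a ⊓ c) := by
  have h1 : (a ⊓ b) * (a ⊓ c) = (a * a ⊓ b * a) ⊓ (a * c ⊓ b * c) := by
    rw [mul_inf, inf_mul, inf_mul]
  rw [h1]
  refine le_inf (le_inf ?_ ?_) (le_inf ?_ ?_)
  · exact le_trans inf_le_left (le_mul_of_one_le_right' ha)
  · exact le_trans inf_le_left (le_mul_of_one_le_left' hb)
  · exact le_trans inf_le_left (le_mul_of_one_le_right' hc)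
  · exact inf_le_right

/-- generating submonoid -/
def Wmon (M : Set L) (a : L) : Submonoid L :=
  Submonoid.closure ({a} ∪ {m | m ∈ M ∧ 1 ≤ m})

lemma Wmon_pos {M : Set L} {a : L} (ha : 1 ≤ a) : ∀ P ∈ Wmon M a, 1 ≤ P := by
  intro P hP
  induction hP using Submonoid.closure_induction with
  | mem x hx => rcases hx with h | h; · rw [Set.mem_singleton_iff] at h; subst h; exact ha
                · exact h.2
  | one => exact le_rfl
  | mul x y hx hy ihx ihy => exact one_le_mul ihx ihy

lemma Wmon_inf_bound {M : Set L} (hM : IsCS M) {a b : L} (ha : 1 ≤ a) (hb : 1 ≤ b)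
    (hab : a ⊓ b = 1) : ∀ P ∈ Wmon M a, ∃ m ∈ M, P ⊓ b ≤ m := by
  intro P hP
  induction hP using Submonoid.closure_induction with
  | mem x hx =>
    rcases hx with h | h
    · rw [Set.mem_singleton_iff] at h; subst h
      exact ⟨1, hM.one_mem, le_of_eq hab⟩
    · exact ⟨x, h.1, inf_le_left⟩
  | one => exact ⟨1, hM.one_mem, inf_le_left⟩
  | mul x y hx hy ihx ihy =>
    obtain ⟨m₁, hm₁, h₁⟩ := ihx
    obtain ⟨m₂, hm₂, h₂⟩ := ihy
    refine ⟨m₁ * m₂, hM.mul_mem hm₁ hm₂, ?_⟩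
    have h3 : (x * y) ⊓ b ≤ (b ⊓ x) * (b ⊓ y) := by
      rw [inf_comm]
      exact inf_mul_le_of_one_le hb (Wmon_pos ha x hx) (Wmon_pos ha y hy)
    refine h3.trans ?_
    rw [inf_comm b x, inf_comm b y]
    exact mul_le_mul' h₁ h₂

lemma Wmon_inf_bound₂ {M : Set L} (hM : IsCS M) {a b : L} (ha : 1 ≤ a) (hb : 1 ≤ b)
    (hab : a ⊓ b = 1) : ∀ P ∈ Wmon M a, ∀ Q ∈ Wmon M b, ∃ m ∈ M, P ⊓ Q ≤ m := by
  intro P hP Q hQ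
  induction hQ using Submonoid.closure_induction with
  | mem x hx =>
    rcases hx with h | h
    · rw [Set.mem_singleton_iff] at h; subst h
      exact Wmon_inf_bound hM ha hb hab P hP
    · exact ⟨x, h.1, inf_le_right⟩
  | one => exact ⟨1, hM.one_mem, inf_le_right⟩
  | mul x y hx hy ihx ihy =>
    obtain ⟨m₁, hm₁, h₁⟩ := ihx
    obtain ⟨m₂, hm₂, h₂⟩ := ihy
    refine ⟨m₁ * m₂, hM.mul_mem hm₁ hm₂, ?_⟩
    have h3 : P ⊓ (x * y) ≤ (P ⊓ x) * (P ⊓ y) :=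
      inf_mul_le_of_one_le (Wmon_pos ha P hP) (Wmon_pos hb x hx) (Wmon_pos hb y hy)
    exact h3.trans (mul_le_mul' h₁ h₂)

/-- convex ℓ-subgroup generated by M and a positive element a -/
def Dgen (M : Set L) (a : L) : Set L := {x | ∃ P ∈ Wmon M a, x ⊔ x⁻¹ ≤ P}

lemma Dgen_isCS {M : Set L} (hM : IsCS M) {a : L} (ha : 1 ≤ a) : IsCS (Dgen M a) := by
  constructor
  · exact ⟨1, Submonoid.one_mem _, by simp⟩
  · rintro x y ⟨P, hP, hx⟩ ⟨Q, hQ, hy⟩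
    have hxP : x ≤ P := le_trans le_sup_left hx
    have hxiP : x⁻¹ ≤ P := le_trans le_sup_right hx
    have hyQ : y ≤ Q := le_trans le_sup_left hy
    have hyiQ : y⁻¹ ≤ Q := le_trans le_sup_right hy
    have hP1 : (1:L) ≤ P := Wmon_pos ha P hP
    have hQ1 : (1:L) ≤ Q := Wmon_pos ha Q hQ
    refine ⟨P * Q * (P * Q), Submonoid.mul_mem _ (Submonoid.mul_mem _ hP hQ)
      (Submonoid.mul_mem _ hP hQ), sup_le ?_ ?_⟩
    · calc x * y ≤ P * Q := mul_le_mul' hxP hyQ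
        _ ≤ P * Q * (P * Q) := le_mul_of_one_le_right' (one_le_mul hP1 hQ1)
    · calc (x * y)⁻¹ = y⁻¹ * x⁻¹ := mul_inv_rev x y
        _ ≤ Q * P := mul_le_mul' hyiQ hxiP
        _ ≤ P * (Q * P) := le_mul_of_one_le_left' hP1
        _ ≤ P * (Q * P) * Q := le_mul_of_one_le_right' hQ1
        _ = P * Q * (P * Q) := by rw [← mul_assoc P Q P, mul_assoc (P * Q) P Q]
  · rintro x ⟨P, hP, hx⟩
    exact ⟨P, hP, by rwa [sup_comm, inv_inv] ⟩
  · rintro x c ⟨P, hP, hc⟩ hx1 hxc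
    refine ⟨P, hP, sup_le ?_ ?_⟩
    · exact le_trans hxc (le_trans le_sup_left hc)
    · exact le_trans (inv_le_one'.mpr hx1) (Wmon_pos ha P hP)
  · rintro x ⟨P, hP, hx⟩
    have hP1 : (1:L) ≤ P := Wmon_pos ha P hP
    refine ⟨P, hP, sup_le (sup_le (le_trans le_sup_left hx) hP1) ?_⟩
    · rw [inv_sup, inv_one]
      exact le_trans inf_le_right hP1

lemma subset_Dgen {M : Set L} (hM : IsCS M) (a : L) : M ⊆ Dgen M a := by
  intro m hm
  have hpos : (1 : L) ≤ m ⊔ m⁻¹ := one_le_mabs m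
  exact ⟨m ⊔ m⁻¹, Submonoid.subset_closure (Or.inr ⟨hM.mabs_mem hm, hpos⟩), le_rfl⟩

lemma mem_Dgen_self {M : Set L} {a : L} (ha : 1 ≤ a) : a ∈ Dgen M a := by
  refine ⟨a, Submonoid.subset_closure (Or.inl rfl), sup_le le_rfl (le_trans (inv_le_one'.mpr ha) ha)⟩

/-- existence of a "value": maximal convex subgroup avoiding g₀ -/
lemma exists_value (g₀ : L) (hg : g₀ ≠ 1) :
    ∃ M : Set L, IsCS M ∧ g₀ ∉ M ∧ Maximal (fun S => IsCS S ∧ g₀ ∉ S) M := by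
  have h1 : IsCS ({1} : Set L) ∧ g₀ ∉ ({1} : Set L) := by
    refine ⟨⟨rfl, ?_, ?_, ?_, ?_⟩, by simpa using hg⟩
    · intro a b ha hb
      simp only [Set.mem_singleton_iff] at *
      subst ha; subst hb; simp
    · intro a ha
      simp only [Set.mem_singleton_iff] at *
      subst ha; simp
    · intro a c hc h1 h2
      simp only [Set.mem_singleton_iff] at *
      subst hc; exact le_antisymm h2 h1
    · intro a ha
      simp only [Set.mem_singleton_iff] at *
      subst ha; simp
  have hz : ∀ c ⊆ {S : Set L | IsCS S ∧ g₀ ∉ S}, IsChain (· ⊆ ·) c → c.Nonempty →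
      ∃ ub ∈ {S : Set L | IsCS S ∧ g₀ ∉ S}, ∀ s ∈ c, s ⊆ ub := by
    intro c hc hchain hne
    refine ⟨⋃₀ c, ⟨⟨?_, ?_, ?_, ?_, ?_⟩, ?_⟩, fun s hs => Set.subset_sUnion_of_mem hs⟩
    · obtain ⟨S, hS⟩ := hne
      exact Set.mem_sUnion.mpr ⟨S, hS, (hc hS).1.one_mem⟩
    · intro a b ha hb
      obtain ⟨S, hS, haS⟩ := ha
      obtain ⟨T, hT, hbT⟩ := hb
      rcases hchain.total hS hT with h | h
      · exact ⟨T, hT, (hc hT).1.mul_mem (h haS) hbT⟩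
      · exact ⟨S, hS, (hc hS).1.mul_mem haS (h hbT)⟩
    · intro a ha
      obtain ⟨S, hS, haS⟩ := ha
      exact ⟨S, hS, (hc hS).1.inv_mem haS⟩
    · intro a x hx h1 h2
      obtain ⟨S, hS, haS⟩ := hx
      exact ⟨S, hS, (hc hS).1.conv haS h1 h2⟩
    · intro a ha
      obtain ⟨S, hS, haS⟩ := ha
      exact ⟨S, hS, (hc hS).1.sup_one_mem haS⟩
    · intro hg0
      obtain ⟨S, hS, hgS⟩ := hg0
      exact (hc hS).2 hgS
  obtain ⟨M, -, hmax⟩ := zorn_subset_nonempty {S : Set L | IsCS S ∧ g₀ ∉ S} hz _ h1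
  exact ⟨M, hmax.prop.1, hmax.prop.2, hmax⟩

/-- a value is prime (for orthogonal positive elements) -/
lemma value_prime {g₀ : L} {M : Set L}
    (hmax : Maximal (fun S => IsCS S ∧ g₀ ∉ S) M) (hgle : g₀ ≤ 1)
    {u v : L} (hu : 1 ≤ u) (hv : 1 ≤ v) (huv : u ⊓ v = 1) : u ∈ M ∨ v ∈ M := by
  have hM : IsCS M := hmax.prop.1
  have hgM : g₀ ∉ M := hmax.prop.2
  by_contra hcon
  push_neg at hcon
  obtain ⟨huM, hvM⟩ := hcon
  -- g₀ is in both generated convex subgroups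
  have hgu : g₀ ∈ Dgen M u := by
    by_contra hgu
    have : Dgen M u ⊆ M := hmax.le_of_ge ⟨Dgen_isCS hM hu, hgu⟩ (subset_Dgen hM u)
    exact huM (this (mem_Dgen_self hu))
  have hgv : g₀ ∈ Dgen M v := by
    by_contra hgv
    have : Dgen M v ⊆ M := hmax.le_of_ge ⟨Dgen_isCS hM hv, hgv⟩ (subset_Dgen hM v)
    exact hvM (this (mem_Dgen_self hv))
  obtain ⟨P, hP, hgP⟩ := hgu
  obtain ⟨Q, hQ, hgQ⟩ := hgv
  obtain ⟨m, hm, hPQ⟩ := Wmon_inf_bound₂ hM hu hv huv P hP Q hQ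
  have habs : g₀ ⊔ g₀⁻¹ ∈ M := by
    exact hM.conv hm (one_le_mabs g₀) (le_trans (le_inf hgP hgQ) hPQ)
  have : g₀ ⊔ g₀⁻¹ = g₀⁻¹ := by
    rw [sup_eq_right]
    exact le_trans hgle (one_le_inv'.mpr hgle)
  rw [this] at habs
  exact hgM (inv_inv g₀ ▸ hM.inv_mem habs)

/-- totality from primality -/
lemma value_total {g₀ : L} {M : Set L}
    (hmax : Maximal (fun S => IsCS S ∧ g₀ ∉ S) M) (hgle : g₀ ≤ 1) (x : L) :
    (∃ c ∈ M, x ≤ c) ∨ (∃ c ∈ M, c ≤ x) := by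
  have huv : (x ⊔ 1) ⊓ (x⁻¹ ⊔ 1) = 1 := by
    have := oneLePart_inf_leOnePart_eq_one x
    rwa [oneLePart_def, leOnePart_def] at this
  rcases value_prime hmax hgle le_sup_right le_sup_right huv with h | h
  · exact Or.inl ⟨x ⊔ 1, h, le_sup_left⟩
  · refine Or.inr ⟨(x⁻¹ ⊔ 1)⁻¹, hmax.prop.1.inv_mem h, ?_⟩
    rw [inv_sup, inv_inv, inv_one]
    exact inf_le_left

end LGroupCS


section Glue

theorem hard_direction {k n : ℕ} (t : Fin n → FreeGroup (Fin k))
    (H : (Finset.univ : Finset (Fin n)).Nonempty)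
    {L : Type} [Group L] [Lattice L]
    [CovariantClass L L (· * ·) (· ≤ ·)]
    [CovariantClass L L (Function.swap (· * ·)) (· ≤ ·)]
    (φ : FreeGroup (Fin k) →* L)
    (hs : ¬ (1 : L) ≤ Finset.univ.sup' H (fun i => φ (t i))) :
    ∃ r : FreeGroup (Fin k) → FreeGroup (Fin k) → Prop,
      IsLinearOrder _ r ∧ (∀ a b c, r a b → r (a * c) (b * c)) ∧
      (∀ i, r 1 (t i) ∧ t i ≠ 1) := by
  classical
  set s : L := Finset.univ.sup' H (fun i => φ (t i)) with hsdef
  have hg0 : s ⊓ 1 ≠ 1 := fun h => hs (inf_eq_right.mp h)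
  obtain ⟨M, hM, hg0M, hmax⟩ := exists_value (s ⊓ 1) hg0
  have hgle : s ⊓ 1 ≤ (1 : L) := inf_le_right
  -- the coset preorder pulled back to the free group
  set Rel1 : FreeGroup (Fin k) → FreeGroup (Fin k) → Prop :=
    fun g h => ∃ c ∈ M, φ g ≤ c * φ h with hRel1
  have hrefl : ∀ g, Rel1 g g := fun g => ⟨1, hM.one_mem, by rw [one_mul]⟩
  have htrans : ∀ g h l, Rel1 g h → Rel1 h l → Rel1 g l := by
    rintro g h l ⟨c, hc, h1⟩ ⟨c', hc', h2⟩
    refine ⟨c * c', hM.mul_mem hc hc', ?_⟩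
    calc φ g ≤ c * φ h := h1
      _ ≤ c * (c' * φ l) := mul_le_mul_right h2 c
      _ = c * c' * φ l := (mul_assoc _ _ _).symm
  have htotal : ∀ g h, Rel1 g h ∨ Rel1 h g := by
    intro g h
    rcases value_total hmax hgle (φ g * (φ h)⁻¹) with ⟨c, hc, hle⟩ | ⟨c, hc, hle⟩
    · left
      refine ⟨c, hc, ?_⟩
      have := mul_le_mul_left hle (φ h)
      rwa [inv_mul_cancel_right] at this
    · right
      refine ⟨c⁻¹, hM.inv_mem hc, ?_⟩
      have h2 : c * φ h ≤ φ g := by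
        have := mul_le_mul_left hle (φ h)
        rwa [mul_assoc, inv_mul_cancel, mul_one] at this
      have := mul_le_mul_right h2 c⁻¹
      rwa [inv_mul_cancel_left] at this
  have hinv : ∀ g h x, Rel1 g h → Rel1 (g * x) (h * x) := by
    rintro g h x ⟨c, hc, h1⟩
    refine ⟨c, hc, ?_⟩
    rw [map_mul, map_mul, ← mul_assoc]
    exact mul_le_mul_left h1 (φ x)
  have hcancel : ∀ g h x, Rel1 (g * x) (h * x) → Rel1 g h := by
    rintro g h x ⟨c, hc, h1⟩
    refine ⟨c, hc, ?_⟩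
    rw [map_mul, map_mul, ← mul_assoc] at h1
    have := mul_le_mul_left h1 (φ x)⁻¹
    rwa [mul_inv_cancel_right, mul_inv_cancel_right] at this
  have hnotpos : ∀ i, ¬ Rel1 1 (t i) := by
    rintro i ⟨c, hc, hle⟩
    rw [map_one] at hle
    have h1 : (φ (t i))⁻¹ ≤ c := by
      have := mul_le_mul_left hle (φ (t i))⁻¹
      rwa [one_mul, mul_assoc, mul_inv_cancel, mul_one] at this
    have h2 : φ (t i) ≤ s := Finset.le_sup' (fun i => φ (t i)) (Finset.mem_univ i)
    have h3 : s⁻¹ ≤ (φ (t i))⁻¹ := inv_le_inv_iff.mpr h2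
    have h4 : (s ⊓ 1)⁻¹ ≤ c ⊔ 1 := by
      rw [inv_inf, inv_one]
      exact sup_le_sup_right (h3.trans h1) 1
    have h5 : (1 : L) ≤ (s ⊓ 1)⁻¹ := one_le_inv'.mpr inf_le_right
    have h6 : (s ⊓ 1)⁻¹ ∈ M := hM.conv (hM.sup_one_mem hc) h5 h4
    exact hg0M (inv_inv (s ⊓ 1) ▸ hM.inv_mem h6)
  have hpos1 : ∀ i, Rel1 (t i) 1 := by
    intro i
    rcases htotal (t i) 1 with h | h
    · exact h
    · exact absurd h (hnotpos i)
  obtain ⟨r₀, hr₀lin, hr₀inv⟩ := freeGroup_exists_rightOrder k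
  haveI : IsLinearOrder (FreeGroup (Fin k)) r₀ := hr₀lin
  refine ⟨fun g h => Rel1 h g ∧ (Rel1 g h → r₀ g h), ?_, ?_, ?_⟩
  · refine { refl := ?_, trans := ?_, antisymm := ?_, total := ?_ }
    · exact fun a => ⟨hrefl a, fun _ => refl_of r₀ a⟩
    · rintro a b c ⟨h1, h1'⟩ ⟨h2, h2'⟩
      refine ⟨htrans c b a h2 h1, fun hac => ?_⟩
      have hab : Rel1 a b := htrans a c b hac h2
      have hbc : Rel1 b c := htrans b a c h1 hac
      exact trans_of r₀ (h1' hab) (h2' hbc)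
    · rintro a b ⟨h1, h1'⟩ ⟨h2, h2'⟩
      exact antisymm_of r₀ (h1' h2) (h2' h1)
    · intro a b
      by_cases hab : Rel1 a b <;> by_cases hba : Rel1 b a
      · rcases total_of r₀ a b with hr | hr
        · exact Or.inl ⟨hba, fun _ => hr⟩
        · exact Or.inr ⟨hab, fun _ => hr⟩
      · exact Or.inr ⟨hab, fun h => absurd h hba⟩
      · exact Or.inl ⟨hba, fun h => absurd h hab⟩
      · rcases htotal a b with h | h
        · exact absurd h hab
        · exact absurd h hba
  · rintro a b c ⟨h1, h1'⟩
    exact ⟨hinv b a c h1, fun h2 => hr₀inv a b c (h1' (hcancel a b c h2))⟩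
  · intro i
    refine ⟨⟨hpos1 i, fun h => absurd h (hnotpos i)⟩, ?_⟩
    intro hti
    exact hnotpos i (hti ▸ hrefl (1 : FreeGroup (Fin k)))

end Glue

section Main

theorem easy_direction {k n : ℕ} (t : Fin n → FreeGroup (Fin k))
    (H : (Finset.univ : Finset (Fin n)).Nonempty)
    (hLHS : ∀ (L : Type) (_ : Group L) (_ : Lattice L)
        (_ : CovariantClass L L (· * ·) (· ≤ ·))
        (_ : CovariantClass L L (Function.swap (· * ·)) (· ≤ ·))
        (φ : FreeGroup (Fin k) →* L),
        (1 : L) ≤ Finset.univ.sup' H (fun i => φ (t i)))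
    (r : FreeGroup (Fin k) → FreeGroup (Fin k) → Prop)
    (hlin : IsLinearOrder _ r) (hinv : ∀ a b c, r a b → r (a * c) (b * c))
    (hpos : ∀ i, r 1 (t i) ∧ t i ≠ 1) : False := by
  classical
  haveI : IsLinearOrder (FreeGroup (Fin k)) r := hlin
  letI : LinearOrder (FreeGroup (Fin k)) :=
    { le := r
      le_refl := fun a => refl_of r a
      le_trans := fun a b c h1 h2 => trans_of r h1 h2
      le_antisymm := fun a b h1 h2 => antisymm_of r h1 h2
      le_total := fun a b => total_of r a b
      toDecidableLE := Classical.decRel r }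
  have hmono : ∀ g : FreeGroup (Fin k), StrictMono (fun a => a * g⁻¹) := by
    intro g a b hab
    obtain ⟨h1, h2⟩ := lt_iff_le_not_ge.mp hab
    refine lt_iff_le_not_ge.mpr ⟨hinv a b g⁻¹ h1, fun hcon => h2 ?_⟩
    have : b * g⁻¹ * g ≤ a * g⁻¹ * g := hinv _ _ g hcon
    simpa using this
  set ψ : FreeGroup (Fin k) → monoPerms (FreeGroup (Fin k)) := fun g =>
    ⟨{ toFun := fun a => a * g⁻¹
       invFun := fun a => a * g
       left_inv := fun a => by simp
       right_inv := fun a => by simp }, hmono g⟩ with hψ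
  set φ : FreeGroup (Fin k) →* monoPerms (FreeGroup (Fin k)) :=
    MonoidHom.mk' ψ (by
      intro g h
      apply Subtype.ext
      apply Equiv.ext
      intro a
      show a * (g * h)⁻¹ = (a * h⁻¹) * g⁻¹
      rw [mul_inv_rev, mul_assoc]) with hφ
  have hle := hLHS (monoPerms (FreeGroup (Fin k))) inferInstance inferInstance
    inferInstance inferInstance φ
  have h1 := hle (1 : FreeGroup (Fin k))
  rw [monoPerms_sup'_apply] at h1
  obtain ⟨j, hjmem, hj⟩ := Finset.exists_mem_eq_sup' H
    (fun i => ((φ (t i) : Equiv.Perm (FreeGroup (Fin k))) 1))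
  rw [hj] at h1
  have h2 : ((φ (t j) : Equiv.Perm (FreeGroup (Fin k))) 1) = (t j)⁻¹ := by
    show (1 : FreeGroup (Fin k)) * (t j)⁻¹ = (t j)⁻¹
    rw [one_mul]
  rw [h2] at h1
  have h3 : ((1 : monoPerms (FreeGroup (Fin k))) : Equiv.Perm (FreeGroup (Fin k)))
      (1 : FreeGroup (Fin k)) = (1 : FreeGroup (Fin k)) := rfl
  rw [h3] at h1
  -- h1 : r 1 (t j)⁻¹
  have h4 : r (1 * t j) ((t j)⁻¹ * t j) := hinv _ _ (t j) h1
  rw [one_mul, inv_mul_cancel] at h4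
  exact (hpos j).2 (antisymm_of r h4 (hpos j).1)

/-- `e ≤ t₁ ∨ … ∨ tₙ` holds in all ℓ-groups iff `{t i}` does not extend to a
right order of the free group `F(k)`. -/
theorem lgroup_validity_iff_not_right_orderable (k n : ℕ) (hn : 0 < n)
    (t : Fin n → FreeGroup (Fin k)) :
    (∀ (L : Type) (_ : Group L) (_ : Lattice L)
        (_ : CovariantClass L L (· * ·) (· ≤ ·))
        (_ : CovariantClass L L (Function.swap (· * ·)) (· ≤ ·))
        (φ : FreeGroup (Fin k) →* L),
        (1 : L) ≤ Finset.univ.sup' (Finset.univ_nonempty_iff.mpr ⟨⟨0, hn⟩⟩)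
          (fun i => φ (t i))) ↔
      ¬ (∃ r : FreeGroup (Fin k) → FreeGroup (Fin k) → Prop,
          IsLinearOrder _ r ∧
          (∀ a b c, r a b → r (a * c) (b * c)) ∧
          (∀ i, r 1 (t i) ∧ t i ≠ 1)) := by
  constructor
  · rintro hLHS ⟨r, hlin, hinv, hpos⟩
    exact easy_direction t _ hLHS r hlin hinv hpos
  · intro hno L iG iL iC1 iC2 φ
    by_contra hs
    exact hno (@hard_direction k n t _ L iG iL iC1 iC2 φ hs)

end Main
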